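/- Let G be a bipartite graph with parts U = {u_1,…,u_n} and V = {v_1,…,v_n}, with edge variables x_{ij} for edges u_i v_j. For every orientation D of G, there exists a sign matrix S_D ∈ {±1}^{n×n} such that the Pfaffian of the weighted skew-adjacency matrix A_D (with vertex order u_1,…,u_n,v_1,…,v_n) satisfies Pf(A_D) = (-1)^{n(n-1)/2} · det(S_D ∘ B_G), where B_G is the weighted biadjacency matrix of G and ∘ is the entrywise product. -/
import Mathlib


open MvPolynomial

/-- The Pfaffian of a `2n × 2n` matrix, defined as the sum over perfect matchings
of the index set (encoded by permutations `σ` with `σ(2i) < σ(2i+1)` and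
`σ(0) < σ(2) < ⋯ < σ(2n-2)`) of the signed products of entries. -/
def Matrix.pf {R : Type*} [CommRing R] {n : ℕ} (A : Matrix (Fin (2 * n)) (Fin (2 * n)) R) : R :=
  ∑ σ ∈ Finset.univ.filter (fun σ : Equiv.Perm (Fin (2 * n)) =>
      (∀ i : Fin n, σ ⟨2 * i.1, by have := i.isLt; omega⟩ <
          σ ⟨2 * i.1 + 1, by have := i.isLt; omega⟩) ∧
      (∀ i j : Fin n, i < j → σ ⟨2 * i.1, by have := i.isLt; omega⟩ <
          σ ⟨2 * j.1, by have := j.isLt; omega⟩)),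
    (Equiv.Perm.sign σ : ℤ) •
      ∏ i : Fin n, A (σ ⟨2 * i.1, by have := i.isLt; omega⟩)
        (σ ⟨2 * i.1 + 1, by have := i.isLt; omega⟩)

/-- The weighted biadjacency matrix of the bipartite graph with parts
`{u₁,…,uₙ}` and `{v₁,…,vₙ}` and edge relation `E`: entry `(i,j)` is the edge
variable `x_{ij}` if `uᵢvⱼ` is an edge, and `0` otherwise. -/
noncomputable def biadj {n : ℕ} (E : Fin n → Fin n → Bool) :
    Matrix (Fin n) (Fin n) (MvPolynomial (Fin n × Fin n) ℝ) := fun i j =>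
  if E i j then X (i, j) else 0

/-- The weighted skew-adjacency matrix of the orientation `D` of the bipartite
graph with edge relation `E`, with vertex order `u₁,…,uₙ,v₁,…,vₙ`.  Here
`D i j = true` means the edge `uᵢvⱼ` is oriented from `uᵢ` to `vⱼ`. -/
noncomputable def skewAdj {n : ℕ} (E : Fin n → Fin n → Bool) (D : Fin n → Fin n → Bool) :
    Matrix (Fin (2 * n)) (Fin (2 * n)) (MvPolynomial (Fin n × Fin n) ℝ) := fun p q =>
  if hp : (p : ℕ) < n then
    if hq : (q : ℕ) < n then 0
    else
      let i : Fin n := ⟨p, hp⟩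
      let j : Fin n := ⟨(q : ℕ) - n, by have := q.isLt; omega⟩
      if E i j then (if D i j then X (i, j) else -X (i, j)) else 0
  else
    if hq : (q : ℕ) < n then
      let i : Fin n := ⟨q, hq⟩
      let j : Fin n := ⟨(p : ℕ) - n, by have := p.isLt; omega⟩
      if E i j then (if D i j then -X (i, j) else X (i, j)) else 0
    else 0

section Aux

lemma strictMono_fin_fix {n : ℕ} {f : Fin n → Fin n} (hf : StrictMono f) (k : Fin n) :
    f k = k := by
  have le1 : ∀ {g : Fin n → Fin n}, StrictMono g → ∀ m, ∀ k : Fin n, k.1 = m → m ≤ (g k).1 := by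
    intro g hg m
    induction m with
    | zero => intro k _; exact Nat.zero_le _
    | succ m ih =>
      intro k hk
      have hm : m < n := by have := k.isLt; omega
      have h1 : (g ⟨m, hm⟩).1 < (g k).1 := hg (by simp only [Fin.lt_def, Fin.val_mk]; omega)
      have h2 := ih ⟨m, hm⟩ rfl
      omega
  have h1 : (k : ℕ) ≤ (f k).1 := le1 hf _ k rfl
  have hg : StrictMono (fun k : Fin n => (f k.rev).rev) :=
    fun a b hab => Fin.rev_lt_rev.mpr (hf (Fin.rev_lt_rev.mpr hab))
  have h2 : (k.rev : ℕ) ≤ ((fun k : Fin n => (f k.rev).rev) k.rev).1 := le1 hg _ k.rev rfl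
  simp only [Fin.rev_rev, Fin.val_rev] at h2
  have hk := k.isLt
  have hfk := (f k).isLt
  exact Fin.ext (by omega)

def shufFun (n : ℕ) (p : Fin (2 * n)) : Fin (2 * n) :=
  if p.1 % 2 = 0 then ⟨p.1 / 2, by have := p.isLt; omega⟩
  else ⟨n + p.1 / 2, by have := p.isLt; omega⟩

def shufInv (n : ℕ) (q : Fin (2 * n)) : Fin (2 * n) :=
  if h : q.1 < n then ⟨2 * q.1, by omega⟩
  else ⟨2 * (q.1 - n) + 1, by have := q.isLt; omega⟩

def shuffleEquiv (n : ℕ) : Equiv.Perm (Fin (2 * n)) where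
  toFun := shufFun n
  invFun := shufInv n
  left_inv p := by
    have hp := p.isLt
    apply Fin.ext
    unfold shufFun
    by_cases h : p.1 % 2 = 0
    · rw [if_pos h]
      unfold shufInv
      rw [dif_pos (by simp only [Fin.val_mk]; omega)]
      simp only [Fin.val_mk]
      omega
    · rw [if_neg h]
      unfold shufInv
      rw [dif_neg (by simp only [Fin.val_mk]; omega)]
      simp only [Fin.val_mk]
      omega
  right_inv q := by
    have hq := q.isLt
    apply Fin.ext
    unfold shufInv
    by_cases h : q.1 < n
    · rw [dif_pos h]
      unfold shufFun
      rw [if_pos (by simp only [Fin.val_mk]; omega)]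
      simp only [Fin.val_mk]
      omega
    · rw [dif_neg h]
      unfold shufFun
      rw [if_neg (by simp only [Fin.val_mk]; omega)]
      simp only [Fin.val_mk]
      omega

lemma shuffleEquiv_apply (n : ℕ) (p : Fin (2 * n)) : shuffleEquiv n p = shufFun n p := rfl

def eSum (n : ℕ) : Fin n ⊕ Fin n ≃ Fin (2 * n) :=
  finSumFinEquiv.trans (finCongr (two_mul n).symm)

lemma eSum_inl {n : ℕ} (i : Fin n) : eSum n (Sum.inl i) = ⟨i.1, by have := i.isLt; omega⟩ := by
  apply Fin.ext; simp [eSum]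

lemma eSum_inr {n : ℕ} (j : Fin n) : eSum n (Sum.inr j) = ⟨n + j.1, by have := j.isLt; omega⟩ := by
  apply Fin.ext; simp [eSum, add_comm]

def fPerm {n : ℕ} (π : Equiv.Perm (Fin n)) : Equiv.Perm (Fin (2 * n)) :=
  (shuffleEquiv n).trans ((eSum n).permCongr (Equiv.sumCongr (1 : Equiv.Perm (Fin n)) π))

lemma fPerm_even {n : ℕ} (π : Equiv.Perm (Fin n)) (k : Fin n) (h : 2 * k.1 < 2 * n) :
    fPerm π ⟨2 * k.1, h⟩ = ⟨k.1, by have := k.isLt; omega⟩ := by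
  have h1 : shuffleEquiv n ⟨2 * k.1, h⟩ = ⟨k.1, by have := k.isLt; omega⟩ := by
    rw [shuffleEquiv_apply]
    unfold shufFun
    rw [if_pos (by simp only [Fin.val_mk]; omega)]
    exact Fin.ext (by simp only [Fin.val_mk]; omega)
  have h2 : (eSum n).symm ⟨k.1, by have := k.isLt; omega⟩ = Sum.inl k := by
    rw [Equiv.symm_apply_eq, eSum_inl]
  simp only [fPerm, Equiv.trans_apply, h1, Equiv.permCongr_apply, h2,
    Equiv.sumCongr_apply, Sum.map_inl, Equiv.Perm.coe_one, id_eq, eSum_inl]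

lemma fPerm_odd {n : ℕ} (π : Equiv.Perm (Fin n)) (k : Fin n) (h : 2 * k.1 + 1 < 2 * n) :
    fPerm π ⟨2 * k.1 + 1, h⟩ = ⟨n + (π k).1, by have := (π k).isLt; omega⟩ := by
  have h1 : shuffleEquiv n ⟨2 * k.1 + 1, h⟩ = ⟨n + k.1, by have := k.isLt; omega⟩ := by
    rw [shuffleEquiv_apply]
    unfold shufFun
    rw [if_neg (by simp only [Fin.val_mk]; omega)]
    exact Fin.ext (by simp only [Fin.val_mk]; omega)
  have h2 : (eSum n).symm ⟨n + k.1, by have := k.isLt; omega⟩ = Sum.inr k := by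
    rw [Equiv.symm_apply_eq, eSum_inr]
  simp only [fPerm, Equiv.trans_apply, h1, Equiv.permCongr_apply, h2,
    Equiv.sumCongr_apply, Sum.map_inr, eSum_inr]

lemma sign_fPerm {n : ℕ} (π : Equiv.Perm (Fin n)) :
    Equiv.Perm.sign (fPerm π) = Equiv.Perm.sign π * Equiv.Perm.sign (shuffleEquiv n) := by
  have : fPerm π = ((eSum n).permCongr (Equiv.sumCongr (1 : Equiv.Perm (Fin n)) π))
      * shuffleEquiv n := rfl
  rw [this, map_mul, Equiv.Perm.sign_permCongr, Equiv.Perm.sign_sumCongr]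
  simp

lemma fPerm_injective {n : ℕ} : Function.Injective (fPerm (n := n)) := by
  intro π π' h
  ext k
  have hk := k.isLt
  have h1 := fPerm_odd π k (by omega)
  have h2 := fPerm_odd π' k (by omega)
  rw [h, h2] at h1
  have h3 := congrArg Fin.val h1
  simp only [Fin.val_mk] at h3
  omega

lemma skewAdj_cross {n : ℕ} (E D : Fin n → Fin n → Bool) (k j : Fin n)
    (h1 : (k.1 : ℕ) < 2 * n) (h2 : n + (j.1 : ℕ) < 2 * n) :
    skewAdj E D ⟨k.1, h1⟩ ⟨n + j.1, h2⟩ =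
      C (if D k j then (1 : ℝ) else -1) * biadj E k j := by
  unfold skewAdj biadj
  rw [dif_pos (by simp only [Fin.val_mk]; exact k.isLt)]
  rw [dif_neg (by simp only [Fin.val_mk]; omega)]
  simp only [Fin.val_mk, Nat.add_sub_cancel_left, Fin.eta]
  by_cases hE : E k j <;> by_cases hD : D k j <;>
    simp [hE, hD, map_neg, map_one]

lemma skewAdj_zero_lo {n : ℕ} (E D : Fin n → Fin n → Bool) {p q : Fin (2 * n)}
    (hp : p.1 < n) (hq : q.1 < n) : skewAdj E D p q = 0 := by
  unfold skewAdj; rw [dif_pos hp, dif_pos hq]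

lemma skewAdj_zero_hi {n : ℕ} (E D : Fin n → Fin n → Bool) {p q : Fin (2 * n)}
    (hp : ¬ p.1 < n) (hq : ¬ q.1 < n) : skewAdj E D p q = 0 := by
  unfold skewAdj; rw [dif_neg hp, dif_neg hq]

lemma key_lemma {n : ℕ} (E D : Fin n → Fin n → Bool) (σ : Equiv.Perm (Fin (2 * n)))
    (hlt : ∀ i : Fin n, σ ⟨2 * i.1, by have := i.isLt; omega⟩ <
        σ ⟨2 * i.1 + 1, by have := i.isLt; omega⟩)
    (hmono : ∀ i j : Fin n, i < j → σ ⟨2 * i.1, by have := i.isLt; omega⟩ <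
        σ ⟨2 * j.1, by have := j.isLt; omega⟩)
    (hne : (∏ i : Fin n, skewAdj E D (σ ⟨2 * i.1, by have := i.isLt; omega⟩)
        (σ ⟨2 * i.1 + 1, by have := i.isLt; omega⟩)) ≠ 0) :
    ∃ π : Equiv.Perm (Fin n), σ = fPerm π := by
  have hcross : ∀ k : Fin n, (σ ⟨2 * k.1, by have := k.isLt; omega⟩).1 < n ∧
      n ≤ (σ ⟨2 * k.1 + 1, by have := k.isLt; omega⟩).1 := by
    intro k
    have hk := hlt k
    rw [Fin.lt_def] at hk
    rcases Nat.lt_or_ge (σ ⟨2 * k.1, by have := k.isLt; omega⟩).1 n with hp | hp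
    · rcases Nat.lt_or_ge (σ ⟨2 * k.1 + 1, by have := k.isLt; omega⟩).1 n with hq | hq
      · exact absurd (Finset.prod_eq_zero (Finset.mem_univ k)
          (skewAdj_zero_lo E D hp hq)) hne
      · exact ⟨hp, hq⟩
    · exact absurd (Finset.prod_eq_zero (Finset.mem_univ k)
        (skewAdj_zero_hi E D (not_lt.mpr hp) (not_lt.mpr (le_trans hp (le_of_lt hk))))) hne
  have heven : ∀ k : Fin n, (σ ⟨2 * k.1, by have := k.isLt; omega⟩).1 = k.1 := by
    have amono : StrictMono (fun k : Fin n =>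
        (⟨(σ ⟨2 * k.1, by have := k.isLt; omega⟩).1, (hcross k).1⟩ : Fin n)) := by
      intro a b hab
      have h := hmono a b hab
      rw [Fin.lt_def] at h ⊢
      simpa using h
    intro k
    have h := congrArg Fin.val (strictMono_fin_fix amono k)
    simpa using h
  have hcinj : Function.Injective (fun k : Fin n =>
      (⟨(σ ⟨2 * k.1 + 1, by have := k.isLt; omega⟩).1 - n,
        by have := (σ ⟨2 * k.1 + 1, by have := k.isLt; omega⟩).isLt;
           have := (hcross k).2; omega⟩ : Fin n)) := by
    intro a b hab
    have h2 := congrArg Fin.val hab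
    simp only [Fin.val_mk] at h2
    have ha := (hcross a).2
    have hb := (hcross b).2
    have h3 : σ ⟨2 * a.1 + 1, by have := a.isLt; omega⟩ =
        σ ⟨2 * b.1 + 1, by have := b.isLt; omega⟩ := Fin.ext (by omega)
    have h4 := congrArg Fin.val (σ.injective h3)
    simp only [Fin.val_mk] at h4
    exact Fin.ext (by omega)
  refine ⟨Equiv.ofBijective _ (Finite.injective_iff_bijective.mp hcinj), ?_⟩
  ext p
  have hp := p.isLt
  by_cases hpar : p.1 % 2 = 0
  · obtain ⟨k, hk2⟩ : ∃ k : Fin n, p = ⟨2 * k.1, by have := k.isLt; omega⟩ :=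
      ⟨⟨p.1 / 2, by omega⟩, Fin.ext (by simp only [Fin.val_mk]; omega)⟩
    rw [hk2, fPerm_even]
    simpa using heven k
  · obtain ⟨k, hk2⟩ : ∃ k : Fin n, p = ⟨2 * k.1 + 1, by have := k.isLt; omega⟩ :=
      ⟨⟨p.1 / 2, by omega⟩, Fin.ext (by simp only [Fin.val_mk]; omega)⟩
    rw [hk2, fPerm_odd]
    simp only [Fin.val_mk, Equiv.ofBijective_apply]
    have := (hcross k).2
    omega

lemma fPerm_mem {n : ℕ} (π : Equiv.Perm (Fin n)) :
    fPerm π ∈ Finset.univ.filter (fun σ : Equiv.Perm (Fin (2 * n)) =>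
      (∀ i : Fin n, σ ⟨2 * i.1, by have := i.isLt; omega⟩ <
          σ ⟨2 * i.1 + 1, by have := i.isLt; omega⟩) ∧
      (∀ i j : Fin n, i < j → σ ⟨2 * i.1, by have := i.isLt; omega⟩ <
          σ ⟨2 * j.1, by have := j.isLt; omega⟩)) := by
  rw [Finset.mem_filter]
  refine ⟨Finset.mem_univ _, fun k => ?_, fun i j hij => ?_⟩
  · rw [fPerm_even, fPerm_odd, Fin.lt_def]
    simp only [Fin.val_mk]
    have := k.isLt
    omega
  · rw [fPerm_even, fPerm_even, Fin.lt_def]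
    simp only [Fin.val_mk]
    rw [Fin.lt_def] at hij
    omega

lemma term_fPerm {n : ℕ} (E D : Fin n → Fin n → Bool) (π : Equiv.Perm (Fin n)) :
    (∏ i : Fin n, skewAdj E D (fPerm π ⟨2 * i.1, by have := i.isLt; omega⟩)
        (fPerm π ⟨2 * i.1 + 1, by have := i.isLt; omega⟩)) =
      ∏ i : Fin n,
        (Matrix.of fun i j => C (if D i j then (1 : ℝ) else -1) * biadj E i j) i (π i) := by
  refine Finset.prod_congr rfl fun k _ => ?_
  rw [fPerm_even, fPerm_odd, skewAdj_cross]
  rfl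

lemma pf_skewAdj {n : ℕ} (E D : Fin n → Fin n → Bool) :
    Matrix.pf (skewAdj E D) =
      ((Equiv.Perm.sign (shuffleEquiv n)) : ℤ) •
        (Matrix.of fun i j => C (if D i j then (1 : ℝ) else -1) * biadj E i j).det := by
  classical
  unfold Matrix.pf
  have step1 : (∑ σ ∈ Finset.univ.filter (fun σ : Equiv.Perm (Fin (2 * n)) =>
      (∀ i : Fin n, σ ⟨2 * i.1, by have := i.isLt; omega⟩ <
          σ ⟨2 * i.1 + 1, by have := i.isLt; omega⟩) ∧
      (∀ i j : Fin n, i < j → σ ⟨2 * i.1, by have := i.isLt; omega⟩ <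
          σ ⟨2 * j.1, by have := j.isLt; omega⟩)),
    (Equiv.Perm.sign σ : ℤ) •
      ∏ i : Fin n, skewAdj E D (σ ⟨2 * i.1, by have := i.isLt; omega⟩)
        (σ ⟨2 * i.1 + 1, by have := i.isLt; omega⟩)) =
      ∑ π : Equiv.Perm (Fin n), (Equiv.Perm.sign (fPerm π) : ℤ) •
        ∏ i : Fin n,
          (Matrix.of fun i j => C (if D i j then (1 : ℝ) else -1) * biadj E i j) i (π i) := by
    refine Finset.sum_bij_ne_zero
      (fun σ h₁ h₂ => Classical.choose (key_lemma E D σ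
        (Finset.mem_filter.mp h₁).2.1 (Finset.mem_filter.mp h₁).2.2
        (fun h0 => h₂ (by rw [h0, smul_zero]))))
      (fun _ _ _ => Finset.mem_univ _) ?_ ?_ ?_
    · intro a₁ h₁₁ h₁₂ a₂ h₂₁ h₂₂ heq
      have s1 := Classical.choose_spec (key_lemma E D a₁
        (Finset.mem_filter.mp h₁₁).2.1 (Finset.mem_filter.mp h₁₁).2.2
        (fun h0 => h₁₂ (by rw [h0, smul_zero])))
      have s2 := Classical.choose_spec (key_lemma E D a₂
        (Finset.mem_filter.mp h₂₁).2.1 (Finset.mem_filter.mp h₂₁).2.2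
        (fun h0 => h₂₂ (by rw [h0, smul_zero])))
      exact s1.trans ((congrArg fPerm heq).trans s2.symm)
    · intro π _ hgne
      have hTne : ((Equiv.Perm.sign (fPerm π) : ℤ) •
          ∏ i : Fin n, skewAdj E D (fPerm π ⟨2 * i.1, by have := i.isLt; omega⟩)
            (fPerm π ⟨2 * i.1 + 1, by have := i.isLt; omega⟩)) ≠ 0 := by
        rw [term_fPerm E D π]
        exact hgne
      refine ⟨fPerm π, fPerm_mem π, hTne, ?_⟩
      have hs := Classical.choose_spec (key_lemma E D (fPerm π)
        (Finset.mem_filter.mp (fPerm_mem π)).2.1 (Finset.mem_filter.mp (fPerm_mem π)).2.2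
        (fun h0 => hTne (by rw [h0, smul_zero])))
      exact (fPerm_injective hs).symm
    · intro σ h₁ h₂
      have hs := Classical.choose_spec (key_lemma E D σ
        (Finset.mem_filter.mp h₁).2.1 (Finset.mem_filter.mp h₁).2.2
        (fun h0 => h₂ (by rw [h0, smul_zero])))
      conv_lhs => rw [hs]
      rw [term_fPerm]
  rw [step1]
  have step2 : ∀ π : Equiv.Perm (Fin n),
      (Equiv.Perm.sign (fPerm π) : ℤ) •
        ∏ i : Fin n,
          (Matrix.of fun i j => C (if D i j then (1 : ℝ) else -1) * biadj E i j) i (π i) =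
      (Equiv.Perm.sign (shuffleEquiv n) : ℤ) • (Equiv.Perm.sign π : ℤ) •
        ∏ i : Fin n,
          (Matrix.of fun i j => C (if D i j then (1 : ℝ) else -1) * biadj E i j) i (π i) := by
    intro π
    rw [sign_fPerm, Units.val_mul, mul_comm, mul_smul]
  rw [Finset.sum_congr rfl (fun π _ => step2 π), ← Finset.smul_sum]
  congr 1
  rw [← Matrix.det_transpose, Matrix.det_apply]
  refine Finset.sum_congr rfl fun π _ => ?_
  rw [Units.smul_def]
  congr 1

end Aux


theorem bipartite_pf_eq_signed_det {n : ℕ} (E : Fin n → Fin n → Bool)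
    (D : Fin n → Fin n → Bool) :
    ∃ S : Matrix (Fin n) (Fin n) ℝ,
      (∀ i j, S i j = 1 ∨ S i j = -1) ∧
      Matrix.pf (skewAdj E D) =
        (-1 : MvPolynomial (Fin n × Fin n) ℝ) ^ (n * (n - 1) / 2) *
          (Matrix.of fun i j => C (S i j) * biadj E i j).det := by
  classical
  rcases Nat.eq_zero_or_pos n with h0 | hpos
  · subst h0
    refine ⟨fun i j => 1, fun i j => i.elim0, ?_⟩
    rw [pf_skewAdj]
    have h1 : shuffleEquiv 0 = 1 := by
      apply Equiv.ext
      intro x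
      exact x.elim0
    rw [h1, map_one]
    rw [Matrix.det_fin_zero, Matrix.det_fin_zero]
    norm_num
  · rw [pf_skewAdj]
    set ε : ℤˣ := Equiv.Perm.sign (shuffleEquiv n) with hε
    set pw : ℕ := n * (n - 1) / 2 with hpw
    set δ : ℝ := ((ε : ℤ) : ℝ) * (-1 : ℝ) ^ pw with hδ
    have hpow2 : (-1 : ℝ) ^ pw = 1 ∨ (-1 : ℝ) ^ pw = -1 := neg_one_pow_eq_or ℝ pw
    have hδ2 : δ = 1 ∨ δ = -1 := by
      rcases Int.units_eq_one_or ε with h | h <;> rcases hpow2 with h2 | h2 <;>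
        rw [hδ, h, h2] <;> norm_num
    set M : Matrix (Fin n) (Fin n) (MvPolynomial (Fin n × Fin n) ℝ) :=
      Matrix.of fun i j => C (if D i j then (1 : ℝ) else -1) * biadj E i j with hM
    refine ⟨fun i j => (if i.1 = 0 then δ else 1) * (if D i j then 1 else -1), ?_, ?_⟩
    · intro i j
      by_cases h1 : i.1 = 0 <;> by_cases h2 : D i j <;>
        rcases hδ2 with h | h <;>
        simp only [h1, h2, if_true, if_false, reduceIte, h] <;> norm_num
    · have hmat : (Matrix.of fun i j =>
          C ((if i.1 = 0 then δ else 1) * (if D i j then (1 : ℝ) else -1)) * biadj E i j)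
          = M.updateRow ⟨0, hpos⟩ ((C δ : MvPolynomial (Fin n × Fin n) ℝ) • M ⟨0, hpos⟩) := by
        refine Matrix.ext fun i j => ?_
        by_cases h1 : i = ⟨0, hpos⟩
        · subst h1
          by_cases hD : D ⟨0, hpos⟩ j <;>
            simp [hM, hD, map_mul, map_neg, mul_assoc]
        · have h2 : i.1 ≠ 0 := fun hh => h1 (Fin.ext hh)
          simp only [Matrix.of_apply, Matrix.updateRow_ne h1, hM, h2, if_false, one_mul]
      rw [hmat, Matrix.det_updateRow_smul, Matrix.updateRow_eq_self]
      have hδC : (C δ : MvPolynomial (Fin n × Fin n) ℝ) = C ((ε : ℤ) : ℝ) * (-1) ^ pw := by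
        rw [hδ, map_mul, map_pow, map_neg, map_one]
      rw [hδC]
      have hone : ((-1 : MvPolynomial (Fin n × Fin n) ℝ)) ^ pw * (-1) ^ pw = 1 := by
        rw [← pow_add, ← two_mul, pow_mul, neg_one_sq, one_pow]
      have hre : ((-1 : MvPolynomial (Fin n × Fin n) ℝ)) ^ pw
          * (C ((ε : ℤ) : ℝ) * (-1) ^ pw * M.det)
          = C ((ε : ℤ) : ℝ) * (((-1) ^ pw * (-1) ^ pw) * M.det) := by ring
      rw [hre, hone, one_mul]
      rcases Int.units_eq_one_or ε with h | h <;> rw [h] <;>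
        simp [map_neg, map_one]
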